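/- Let α > −1 and define q(x) = −x^α for x ≥ 1, and Q(y) = 2∫₁^y q(x) dx for y ≥ 1. Then ∫₁^∞ e^{−Q(y)} (∫_y^∞ e^{Q(z)} dz) dy < ∞ if and only if α > 1. -/

import Mathlib

open MeasureTheory Set

section Stmt15Aux

open Real Filter


private lemma stmt15_rpow_add_le {a b p : ℝ} (ha : 0 ≤ a) (hb : 0 ≤ b) (hp : 0 ≤ p)
    (hp1 : p ≤ 1) : (a + b) ^ p ≤ a ^ p + b ^ p := by
  have h := NNReal.rpow_add_le_add_rpow ⟨a, ha⟩ ⟨b, hb⟩ hp hp1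
  have := NNReal.coe_le_coe.2 h
  push_cast [NNReal.coe_rpow] at this
  convert this using 2 <;> rfl

private lemma stmt15_bernoulli_lower {y d β : ℝ} (hy : 0 < y) (hd : 0 ≤ d) (hβ : 1 ≤ β) :
    y ^ β + β * y ^ (β - 1) * d ≤ (y + d) ^ β := by
  have hs : (-1:ℝ) ≤ d / y := le_trans (by norm_num) (by positivity : (0:ℝ) ≤ d / y)
  have hb := one_add_mul_self_le_rpow_one_add hs hβ
  have h1 : (1 + d / y : ℝ) = (y + d) / y := by field_simp
  rw [h1, Real.div_rpow (by linarith) hy.le] at hb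
  have hyβ : (0:ℝ) < y ^ β := Real.rpow_pos_of_pos hy β
  have hb' := mul_le_mul_of_nonneg_right hb hyβ.le
  rw [div_mul_cancel₀ _ hyβ.ne'] at hb'
  have h2 : (1 + β * (d / y)) * y ^ β = y ^ β + β * y ^ (β - 1) * d := by
    have h3 : y ^ β = y ^ (β - 1) * y := by
      rw [← Real.rpow_add_one hy.ne']; ring_nf
    rw [h3]; field_simp
  linarith [h2 ▸ hb']

private lemma stmt15_bernoulli_upper {y h β : ℝ} (hy : 0 < y) (hh : 0 ≤ h) (hβ : 1 ≤ β) :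
    (y + h) ^ β ≤ y ^ β + β * (y + h) ^ (β - 1) * h := by
  have hyh : (0:ℝ) < y + h := by linarith
  have hs : (-1:ℝ) ≤ -(h / (y + h)) := by
    rw [neg_le, neg_neg]
    exact div_le_one_of_le₀ (by linarith) hyh.le
  have hb := one_add_mul_self_le_rpow_one_add hs hβ
  have h1 : (1 + -(h / (y + h)) : ℝ) = y / (y + h) := by field_simp; ring
  rw [h1, Real.div_rpow hy.le hyh.le] at hb
  have hyβ : (0:ℝ) < (y + h) ^ β := Real.rpow_pos_of_pos hyh β
  have hb' := mul_le_mul_of_nonneg_right hb hyβ.le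
  rw [div_mul_cancel₀ _ hyβ.ne'] at hb'
  have h2 : (1 + β * -(h / (y + h))) * (y + h) ^ β
      = (y + h) ^ β - β * (y + h) ^ (β - 1) * h := by
    have h3 : (y + h) ^ β = (y + h) ^ (β - 1) * (y + h) := by
      rw [← Real.rpow_add_one hyh.ne']; ring_nf
    rw [h3]; field_simp; ring
  linarith [h2 ▸ hb']


private lemma stmt15_tail (y a : ℝ) (ha : 0 < a) :
    ∫⁻ z in Ici y, ENNReal.ofReal (Real.exp (-(a * (z - y)))) = ENNReal.ofReal (1 / a) := by
  have hres : volume.restrict (Ici y) = volume.restrict (Ioi y) :=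
    (Measure.restrict_congr_set Ioi_ae_eq_Ici).symm
  rw [hres]
  have hint : IntegrableOn (fun z => Real.exp (-(a * (z - y)))) (Ioi y) := by
    have h0 : IntegrableOn (fun z => Real.exp (a * y) * Real.exp (-a * z)) (Ioi y) :=
      (exp_neg_integrableOn_Ioi y ha).const_mul (Real.exp (a * y))
    apply h0.congr_fun _ measurableSet_Ioi
    intro z _
    show Real.exp (a * y) * Real.exp (-a * z) = Real.exp (-(a * (z - y)))
    rw [← Real.exp_add]
    congr 1
    ring
  have hnn : 0 ≤ᵐ[volume.restrict (Ioi y)] fun z => Real.exp (-(a * (z - y))) :=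
    ae_of_all _ fun z => (Real.exp_pos _).le
  rw [← ofReal_integral_eq_lintegral_ofReal hint hnn]
  congr 1
  have hd : ∀ x ∈ Ici y, HasDerivAt (fun z => -Real.exp (-(a * (z - y))) / a)
      (Real.exp (-(a * (x - y)))) x := by
    intro x _
    have h1 : HasDerivAt (fun z : ℝ => -(a * (z - y))) (-a) x := by
      have h0 := (((hasDerivAt_id x).sub_const y).const_mul a).neg
      simp only [mul_one] at h0
      exact h0
    have h3 := ((h1.exp).div_const a).neg
    refine (h3.congr_of_eventuallyEq (Filter.Eventually.of_forall fun z => by simp [neg_div])).congr_deriv ?_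
    rw [mul_neg, neg_div, neg_neg, mul_div_assoc, div_self ha.ne', mul_one]
  have htend : Tendsto (fun z => -Real.exp (-(a * (z - y))) / a) atTop (nhds 0) := by
    have h5 : Tendsto (fun z : ℝ => a * (z - y)) atTop atTop :=
      (tendsto_atTop_add_const_right atTop (-y) tendsto_id).const_mul_atTop ha
    have h6 : Tendsto (fun z : ℝ => Real.exp (-(a * (z - y)))) atTop (nhds 0) :=
      Real.tendsto_exp_atBot.comp ((tendsto_neg_atTop_atBot).comp h5)
    have := (h6.neg).div_const a
    simpa using this
  have hcont : ContinuousWithinAt (fun z => -Real.exp (-(a * (z - y))) / a) (Ici y) y :=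
    ((by fun_prop : Continuous (fun z => -Real.exp (-(a * (z - y))) / a)).continuousWithinAt)
  rw [integral_Ioi_of_hasDerivAt_of_tendsto hcont (fun x hx => hd x (mem_Ici.2 (le_of_lt hx)))
      hint htend]
  simp [Real.exp_zero]
  field_simp


end Stmt15Aux

/-- For `q(x) = -x^α` on `[1,∞)` with `α > -1` and `Q(y) = 2∫₁^y q`,
condition (H3), i.e. `∫₁^∞ e^{-Q(y)} ∫_y^∞ e^{Q(z)} dz dy < ∞`, holds iff `α > 1`. -/
theorem stmt15 (α : ℝ) (hα : -1 < α)
    (q : ℝ → ℝ) (hq : ∀ x ≥ (1:ℝ), q x = -(x ^ α))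
    (Q : ℝ → ℝ) (hQ : ∀ y, Q y = 2 * ∫ x in (1:ℝ)..y, q x) :
    (∫⁻ y in Ici (1:ℝ), ENNReal.ofReal (Real.exp (-Q y)) *
      ∫⁻ z in Ici y, ENNReal.ofReal (Real.exp (Q z))) < ⊤ ↔ 1 < α := by
  set β : ℝ := α + 1 with hβdef
  have hβ : 0 < β := by rw [hβdef]; linarith
  have hQ1 : ∀ y ≥ (1:ℝ), Q y = -(2 / β) * (y ^ β - 1) := by
    intro y hy
    rw [hQ]
    have hc : ∫ x in (1:ℝ)..y, q x = ∫ x in (1:ℝ)..y, -(x ^ α) := by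
      apply intervalIntegral.integral_congr
      intro x hx
      rw [Set.uIcc_of_le hy] at hx
      exact hq x hx.1
    rw [hc, intervalIntegral.integral_neg, integral_rpow (Or.inl hα), Real.one_rpow]
    field_simp
    have h1 : (1 + α) ≠ 0 := (by linarith : (0:ℝ) < 1 + α).ne'
    rw [hβdef, add_comm α 1, mul_div_assoc, div_self h1, mul_one]
  have bern : ∀ {y d b : ℝ}, 0 < y → 0 ≤ d → 1 ≤ b →
      y ^ b + b * y ^ (b - 1) * d ≤ (y + d) ^ b := fun hy hd hb =>
    stmt15_bernoulli_lower hy hd hb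
  have bernup : ∀ {y h b : ℝ}, 0 < y → 0 ≤ h → 1 ≤ b →
      (y + h) ^ b ≤ y ^ b + b * (y + h) ^ (b - 1) * h := fun hy hh hb =>
    stmt15_bernoulli_upper hy hh hb
  have subadd : ∀ {a b p : ℝ}, 0 ≤ a → 0 ≤ b → 0 ≤ p → p ≤ 1 →
      (a + b) ^ p ≤ a ^ p + b ^ p := fun ha hb hp hp1 => stmt15_rpow_add_le ha hb hp hp1
  have tail : ∀ (y a : ℝ), 0 < a →
      (∫⁻ z in Ici y, ENNReal.ofReal (Real.exp (-(a * (z - y))))) = ENNReal.ofReal (1 / a) :=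
    fun y a ha => stmt15_tail y a ha
  constructor
  · intro hfin
    by_contra hcon
    push_neg at hcon
    have hβ2 : β ≤ 2 := by rw [hβdef]; linarith
    set D : ℝ := 2 ^ (β:ℝ) + 2 / β with hDdef
    have hD1 : (0:ℝ) < 2 ^ (β:ℝ) := Real.rpow_pos_of_pos two_pos β
    have hD2 : (0:ℝ) < 2 / β := by positivity
    have key : ∀ y ∈ Ici (1:ℝ),
        ENNReal.ofReal (Real.exp (-D) * y⁻¹)
          ≤ ENNReal.ofReal (Real.exp (-Q y)) *
              ∫⁻ z in Ici y, ENNReal.ofReal (Real.exp (Q z)) := by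
      intro y hy
      rw [mem_Ici] at hy
      have hy0 : (0:ℝ) < y := by linarith
      set h : ℝ := min 1 (y ^ (1 - β)) with hhdef
      have hh0 : 0 < h := lt_min one_pos (Real.rpow_pos_of_pos hy0 _)
      have hh1 : h ≤ 1 := min_le_left _ _
      have hinv : y⁻¹ ≤ h := by
        apply le_min (inv_le_one_of_one_le₀ hy)
        rw [← Real.rpow_neg_one y]
        exact Real.rpow_le_rpow_of_exponent_le hy (by rw [hβdef]; linarith)
      have claim : ∀ z ∈ Icc y (y + h), Real.exp (Q y - D) ≤ Real.exp (Q z) := by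
        intro z hz
        apply Real.exp_le_exp.2
        rw [hQ1 y hy, hQ1 z (by linarith [hz.1])]
        have hmain : (2 / β) * (z ^ β - y ^ β) ≤ D := by
          have hz2 : z ^ β ≤ (y + h) ^ β :=
            Real.rpow_le_rpow (by linarith [hz.1]) hz.2 hβ.le
          by_cases hβ1 : 1 ≤ β
          · have hup := bernup hy0 hh0.le hβ1
            have h2y : (y + h) ^ (β - 1) ≤ 2 ^ (β - 1) * y ^ (β - 1) := by
              calc (y + h) ^ (β - 1) ≤ (2 * y) ^ (β - 1) :=
                    Real.rpow_le_rpow (by linarith) (by linarith) (by linarith)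
                _ = 2 ^ (β - 1) * y ^ (β - 1) := Real.mul_rpow (by norm_num) hy0.le
            have hhy : h ≤ y ^ (1 - β) := min_le_right _ _
            have t1 : (y + h) ^ (β - 1) * h ≤ (2 ^ (β - 1) * y ^ (β - 1)) * y ^ (1 - β) :=
              mul_le_mul h2y hhy hh0.le (by positivity)
            have t2 : (2 ^ (β - 1) * y ^ (β - 1)) * y ^ (1 - β) = 2 ^ (β - 1 : ℝ) := by
              rw [mul_assoc, ← Real.rpow_add hy0]
              norm_num
            have t3 : β * ((y + h) ^ (β - 1) * h) ≤ β * 2 ^ (β - 1 : ℝ) :=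
              mul_le_mul_of_nonneg_left (t1.trans_eq t2) hβ.le
            have t4 : (2 / β) * (β * 2 ^ (β - 1 : ℝ)) = 2 ^ (β : ℝ) := by
              rw [Real.rpow_sub two_pos, Real.rpow_one]
              field_simp
            have t5 : z ^ β - y ^ β ≤ β * 2 ^ (β - 1 : ℝ) := by nlinarith [hup, hz2, t3]
            have t6 := mul_le_mul_of_nonneg_left t5 hD2.le
            rw [t4] at t6
            linarith
          · push_neg at hβ1
            have hsub : (y + h) ^ β ≤ y ^ β + h ^ β := subadd hy0.le hh0.le hβ.le hβ1.le
            have hle1 : h ^ β ≤ 1 := Real.rpow_le_one hh0.le hh1 hβ.le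
            have t5 : z ^ β - y ^ β ≤ 1 := by linarith
            have t6 := mul_le_mul_of_nonneg_left t5 hD2.le
            rw [mul_one] at t6
            linarith
        linarith
      calc ENNReal.ofReal (Real.exp (-D) * y⁻¹)
          ≤ ENNReal.ofReal (Real.exp (-D) * h) :=
            ENNReal.ofReal_le_ofReal (mul_le_mul_of_nonneg_left hinv (Real.exp_nonneg _))
        _ = ENNReal.ofReal (Real.exp (-Q y)) *
              (ENNReal.ofReal (Real.exp (Q y - D)) * ENNReal.ofReal h) := by
            rw [← ENNReal.ofReal_mul (Real.exp_nonneg _), ← ENNReal.ofReal_mul (Real.exp_nonneg _)]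
            congr 1
            rw [← mul_assoc, ← Real.exp_add]
            ring_nf
        _ ≤ ENNReal.ofReal (Real.exp (-Q y)) *
              ∫⁻ z in Ici y, ENNReal.ofReal (Real.exp (Q z)) := by
            apply mul_le_mul_right
            calc ENNReal.ofReal (Real.exp (Q y - D)) * ENNReal.ofReal h
                = ∫⁻ _ in Icc y (y + h), ENNReal.ofReal (Real.exp (Q y - D)) := by
                  rw [setLIntegral_const, Real.volume_Icc]
                  congr 2
                  ring
              _ ≤ ∫⁻ z in Icc y (y + h), ENNReal.ofReal (Real.exp (Q z)) :=
                  setLIntegral_mono' measurableSet_Icc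
                    (fun z hz => ENNReal.ofReal_le_ofReal (claim z hz))
              _ ≤ ∫⁻ z in Ici y, ENNReal.ofReal (Real.exp (Q z)) :=
                  lintegral_mono_set Icc_subset_Ici_self
    have hres : volume.restrict (Ici (1:ℝ)) = volume.restrict (Ioi 1) :=
      (Measure.restrict_congr_set Ioi_ae_eq_Ici).symm
    have hfin2 : (∫⁻ y in Ioi (1:ℝ), ENNReal.ofReal (Real.exp (-D) * y⁻¹)) < ⊤ := by
      rw [← hres]
      exact lt_of_le_of_lt (setLIntegral_mono' measurableSet_Ici key) hfin
    have hnn : 0 ≤ᵐ[volume.restrict (Ioi (1:ℝ))] fun y => Real.exp (-D) * y⁻¹ := by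
      filter_upwards [ae_restrict_mem measurableSet_Ioi] with y hy
      have : (0:ℝ) < y := lt_trans one_pos hy
      positivity
    have hint : IntegrableOn (fun y : ℝ => Real.exp (-D) * y⁻¹) (Ioi 1) :=
      ⟨(measurable_const.mul measurable_inv).aestronglyMeasurable,
        (hasFiniteIntegral_iff_ofReal hnn).2 hfin2⟩
    have hint2 : IntegrableOn (fun y : ℝ => y ^ (-1 : ℝ)) (Ioi 1) := by
      have h3 : IntegrableOn (fun y : ℝ => Real.exp D * (Real.exp (-D) * y⁻¹)) (Ioi 1) :=
        hint.const_mul (Real.exp D)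
      apply h3.congr_fun _ measurableSet_Ioi
      intro yy _
      show Real.exp D * (Real.exp (-D) * yy⁻¹) = yy ^ (-1 : ℝ)
      rw [Real.rpow_neg_one, ← mul_assoc, ← Real.exp_add]
      simp
    have hbad := (integrableOn_Ioi_rpow_iff one_pos).1 hint2
    linarith
  · intro h1α
    have hβ1 : 1 ≤ β := by rw [hβdef]; linarith
    have key : ∀ y ∈ Ici (1:ℝ),
        ENNReal.ofReal (Real.exp (-Q y)) * (∫⁻ z in Ici y, ENNReal.ofReal (Real.exp (Q z)))
          ≤ ENNReal.ofReal ((1/2) * y ^ (1 - β)) := by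
      intro y hy
      rw [mem_Ici] at hy
      have hy0 : (0:ℝ) < y := by linarith
      set a : ℝ := 2 * y ^ (β - 1) with hadef
      have ha : 0 < a := by positivity
      have step1 : (∫⁻ z in Ici y, ENNReal.ofReal (Real.exp (Q z)))
          ≤ ∫⁻ z in Ici y, ENNReal.ofReal (Real.exp (Q y) * Real.exp (-(a * (z - y)))) := by
        apply setLIntegral_mono' measurableSet_Ici
        intro z hz
        rw [mem_Ici] at hz
        apply ENNReal.ofReal_le_ofReal
        rw [← Real.exp_add]
        apply Real.exp_le_exp.2
        rw [hQ1 y hy, hQ1 z (hy.trans hz)]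
        have hb := bern hy0 (sub_nonneg.2 hz) hβ1
        have hzz : y + (z - y) = z := by ring
        rw [hzz] at hb
        have h2β : (0:ℝ) < 2 / β := by positivity
        have hb' := mul_le_mul_of_nonneg_left hb h2β.le
        have hsimp : 2 / β * (y ^ β + β * y ^ (β - 1) * (z - y))
            = 2 / β * y ^ β + a * (z - y) := by
          rw [hadef]; field_simp
        rw [hsimp] at hb'
        linarith
      have step2 : (∫⁻ z in Ici y, ENNReal.ofReal (Real.exp (Q y) * Real.exp (-(a * (z - y)))))
          = ENNReal.ofReal (Real.exp (Q y)) * ENNReal.ofReal (1 / a) := by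
        simp_rw [ENNReal.ofReal_mul (Real.exp_nonneg _)]
        rw [lintegral_const_mul' _ _ ENNReal.ofReal_ne_top, tail y a ha]
      calc ENNReal.ofReal (Real.exp (-Q y)) * (∫⁻ z in Ici y, ENNReal.ofReal (Real.exp (Q z)))
          ≤ ENNReal.ofReal (Real.exp (-Q y)) *
              (ENNReal.ofReal (Real.exp (Q y)) * ENNReal.ofReal (1 / a)) :=
            mul_le_mul_right (step1.trans_eq step2) _
        _ = ENNReal.ofReal (Real.exp (-Q y) * Real.exp (Q y) * (1 / a)) := by
            rw [ENNReal.ofReal_mul (by positivity), ENNReal.ofReal_mul (by positivity), mul_assoc]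
        _ = ENNReal.ofReal ((1/2) * y ^ (1 - β)) := by
            congr 1
            rw [← Real.exp_add, neg_add_cancel, Real.exp_zero, one_mul, hadef]
            rw [show (1 - β : ℝ) = -(β - 1) by ring, Real.rpow_neg hy0.le]
            field_simp
    have hfin2 : (∫⁻ y in Ici (1:ℝ), ENNReal.ofReal ((1/2) * y ^ (1 - β))) < ⊤ := by
      have hres : volume.restrict (Ici (1:ℝ)) = volume.restrict (Ioi 1) :=
        (Measure.restrict_congr_set Ioi_ae_eq_Ici).symm
      rw [hres]
      have hInt : IntegrableOn (fun y : ℝ => (1/2) * y ^ (1 - β)) (Ioi 1) := by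
        have h4 := (integrableOn_Ioi_rpow_iff one_pos).2
          (show (1 - β : ℝ) < -1 by rw [hβdef]; linarith)
        exact h4.const_mul _
      have hnn : 0 ≤ᵐ[volume.restrict (Ioi (1:ℝ))] fun y => (1/2) * y ^ (1 - β) := by
        filter_upwards [ae_restrict_mem measurableSet_Ioi] with y hy
        have : (0:ℝ) < y := lt_trans one_pos hy
        positivity
      exact (hasFiniteIntegral_iff_ofReal hnn).1 hInt.2
    exact lt_of_le_of_lt (setLIntegral_mono' measurableSet_Ici key) hfin2
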